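/- Let 1 ≤ d ≤ p. There exist a nonempty subset U of G(p,d) := {AAᵀ : A is a p×d real matrix with AᵀA = I_d}, relatively open in G(p,d) inside the space of p×p matrices with the Frobenius norm topology, a map σ : U → {A ∈ ℝ^{p×d} : AᵀA = I_d} with σ(u)σ(u)ᵀ = u for every u ∈ U, and constants C₁, C₂ > 0 such that for all u₁, u₂ ∈ U, C₁‖u₁ − u₂‖_F ≤ ‖σ(u₁) − σ(u₂)‖_F ≤ C₂‖u₁ − u₂‖_F. -/

import Mathlib

open Matrix
open scoped MatrixOrder

/-- Frobenius norm of a real matrix: `‖M‖_F = (tr (M Mᵀ))^{1/2}`. -/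
noncomputable def frobNorm {m n : Type*} [Fintype m] [Fintype n]
    (M : Matrix m n ℝ) : ℝ :=
  Real.sqrt (Matrix.trace (M * Mᵀ))

/-- The Grassmannian `G(p,d)`, viewed as the set of matrices `AAᵀ` for `p×d` matrices `A`
with orthonormal columns (i.e. the rank-`d` orthogonal projection matrices). -/
def grassmannian (p d : ℕ) : Set (Matrix (Fin p) (Fin p) ℝ) :=
  {u | ∃ A : Matrix (Fin p) (Fin d) ℝ, Aᵀ * A = 1 ∧ A * Aᵀ = u}

namespace FrobAux
variable {l m n : Type*} [Fintype l] [Fintype m] [Fintype n]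

lemma trace_mul_transpose (M : Matrix m n ℝ) :
    Matrix.trace (M * Mᵀ) = ∑ i, ∑ j, (M i j)^2 := by
  simp [Matrix.trace, Matrix.diag, Matrix.mul_apply, sq]

lemma frobNorm_eq (M : Matrix m n ℝ) :
    frobNorm M = Real.sqrt (∑ i, ∑ j, (M i j)^2) := by
  rw [frobNorm, trace_mul_transpose]

lemma frobNorm_nonneg (M : Matrix m n ℝ) : 0 ≤ frobNorm M := Real.sqrt_nonneg _

lemma frobNorm_sq (M : Matrix m n ℝ) :
    frobNorm M ^ 2 = ∑ i, ∑ j, (M i j)^2 := by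
  rw [frobNorm_eq, Real.sq_sqrt]
  positivity

lemma frobNorm_sq' (M : Matrix m n ℝ) :
    frobNorm M ^ 2 = Matrix.trace (M * Mᵀ) := by
  rw [frobNorm_sq, trace_mul_transpose]

section inst
attribute [local instance] Matrix.frobeniusSeminormedAddCommGroup Matrix.frobeniusNormedRing

lemma frobNorm_eq_norm (M : Matrix m n ℝ) : frobNorm M = ‖M‖ := by
  rw [frobNorm_eq, Matrix.frobenius_norm_def, ← Real.sqrt_eq_rpow]
  congr 1
  refine Finset.sum_congr rfl fun i _ => Finset.sum_congr rfl fun j _ => ?_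
  rw [show (2:ℝ) = ((2:ℕ):ℝ) by norm_num, Real.rpow_natCast, Real.norm_eq_abs, sq_abs]

lemma frobNorm_add_le (A B : Matrix m n ℝ) :
    frobNorm (A + B) ≤ frobNorm A + frobNorm B := by
  simp only [frobNorm_eq_norm]; exact norm_add_le A B

lemma frobNorm_mul_le (A : Matrix l m ℝ) (B : Matrix m n ℝ) :
    frobNorm (A * B) ≤ frobNorm A * frobNorm B := by
  simp only [frobNorm_eq_norm]; exact Matrix.frobenius_norm_mul A B

end inst

lemma frobNorm_transpose (M : Matrix m n ℝ) : frobNorm Mᵀ = frobNorm M := by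
  simp only [frobNorm_eq]
  rw [Finset.sum_comm]
  simp [Matrix.transpose_apply]

lemma frobNorm_entry_le (M : Matrix m n ℝ) (i : m) (j : n) : |M i j| ≤ frobNorm M := by
  rw [frobNorm_eq, ← Real.sqrt_sq_eq_abs]
  apply Real.sqrt_le_sqrt
  calc M i j ^ 2 ≤ ∑ j', (M i j')^2 :=
        Finset.single_le_sum (f := fun j' => (M i j')^2) (fun _ _ => sq_nonneg _) (Finset.mem_univ j)
    _ ≤ _ := Finset.single_le_sum (f := fun i' => ∑ j', (M i' j')^2)
        (fun _ _ => Finset.sum_nonneg fun _ _ => sq_nonneg _) (Finset.mem_univ i)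

lemma dot_sq_le (x y : n → ℝ) : (x ⬝ᵥ y)^2 ≤ (x ⬝ᵥ x) * (y ⬝ᵥ y) := by
  simpa [dotProduct, sq] using
    Finset.sum_mul_sq_le_sq_mul_sq Finset.univ x y

lemma dot_self_nonneg (x : n → ℝ) : 0 ≤ x ⬝ᵥ x :=
  Finset.sum_nonneg fun i _ => mul_self_nonneg _

lemma abs_quadform_le (N : Matrix n n ℝ) (x : n → ℝ) :
    |x ⬝ᵥ (N *ᵥ x)| ≤ frobNorm N * (x ⬝ᵥ x) := by
  have h1 : x ⬝ᵥ (N *ᵥ x) = ∑ p : n × n, N p.1 p.2 * (x p.1 * x p.2) := by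
    rw [Fintype.sum_prod_type]
    simp [dotProduct, Matrix.mulVec, Finset.mul_sum, mul_assoc, mul_left_comm]
  have h2 : (∑ p : n × n, N p.1 p.2 * (x p.1 * x p.2))^2 ≤
      (∑ p : n × n, (N p.1 p.2)^2) * (∑ p : n × n, (x p.1 * x p.2)^2) :=
    Finset.sum_mul_sq_le_sq_mul_sq Finset.univ _ _
  have h3 : (∑ p : n × n, (x p.1 * x p.2)^2) = (x ⬝ᵥ x)^2 := by
    rw [Fintype.sum_prod_type]
    simp [dotProduct, sq, Finset.sum_mul, Finset.mul_sum]
    ring_nf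
    rw [Finset.sum_comm]
  have h4 : (∑ p : n × n, (N p.1 p.2)^2) = frobNorm N ^ 2 := by
    rw [frobNorm_sq, Fintype.sum_prod_type]
  rw [h1] at *
  have hfx : 0 ≤ frobNorm N * (x ⬝ᵥ x) :=
    mul_nonneg (frobNorm_nonneg N) (dot_self_nonneg x)
  rw [← Real.sqrt_sq_eq_abs, ← Real.sqrt_sq hfx]
  apply Real.sqrt_le_sqrt
  calc (∑ p : n × n, N p.1 p.2 * (x p.1 * x p.2))^2
      ≤ (∑ p : n × n, (N p.1 p.2)^2) * (∑ p : n × n, (x p.1 * x p.2)^2) := h2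
    _ = frobNorm N ^2 * (x ⬝ᵥ x)^2 := by rw [h3, h4]
    _ = (frobNorm N * (x ⬝ᵥ x))^2 := by ring

lemma form_cs (S : Matrix n n ℝ) (hsym : Sᵀ = S)
    (hpsd : ∀ z : n → ℝ, 0 ≤ z ⬝ᵥ (S *ᵥ z)) (x y : n → ℝ) :
    (x ⬝ᵥ (S *ᵥ y))^2 ≤ (x ⬝ᵥ (S *ᵥ x)) * (y ⬝ᵥ (S *ᵥ y)) := by
  have hswap : ∀ a b : n → ℝ, a ⬝ᵥ (S *ᵥ b) = b ⬝ᵥ (S *ᵥ a) := by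
    intro a b
    rw [Matrix.dotProduct_mulVec, ← Matrix.mulVec_transpose, hsym, dotProduct_comm]
  have key : ∀ t : ℝ, 0 ≤ (y ⬝ᵥ (S *ᵥ y)) * (t*t) + (2 * (x ⬝ᵥ (S *ᵥ y))) * t
      + (x ⬝ᵥ (S *ᵥ x)) := by
    intro t
    have := hpsd (x + t • y)
    have hexp : (x + t • y) ⬝ᵥ (S *ᵥ (x + t • y)) =
        (y ⬝ᵥ (S *ᵥ y)) * (t*t) + (2 * (x ⬝ᵥ (S *ᵥ y))) * t + (x ⬝ᵥ (S *ᵥ x)) := by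
      rw [Matrix.mulVec_add, Matrix.mulVec_smul]
      rw [add_dotProduct, smul_dotProduct]
      simp only [dotProduct_add, dotProduct_smul, smul_eq_mul]
      rw [hswap y x]
      ring
    linarith [hexp ▸ this]
  have hd := discrim_le_zero key
  rw [discrim] at hd
  nlinarith [hd]

lemma trace_mul_le (A : Matrix m n ℝ) (B : Matrix n m ℝ) :
    Matrix.trace (A * B) ≤ frobNorm A * frobNorm B := by
  have h1 : Matrix.trace (A * B) = ∑ p : m × n, A p.1 p.2 * B p.2 p.1 := by
    rw [Fintype.sum_prod_type]
    simp [Matrix.trace, Matrix.diag, Matrix.mul_apply]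
  have h2 := Finset.sum_mul_sq_le_sq_mul_sq Finset.univ
    (fun p : m × n => A p.1 p.2) (fun p : m × n => B p.2 p.1)
  have h3 : (∑ p : m × n, (A p.1 p.2)^2) = frobNorm A ^ 2 := by
    rw [frobNorm_sq, Fintype.sum_prod_type]
  have h4 : (∑ p : m × n, (B p.2 p.1)^2) = frobNorm B ^ 2 := by
    rw [frobNorm_sq, Fintype.sum_prod_type, Finset.sum_comm]
  have hnn : 0 ≤ frobNorm A * frobNorm B :=
    mul_nonneg (frobNorm_nonneg A) (frobNorm_nonneg B)
  rw [h1]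
  have habs : |∑ p : m × n, A p.1 p.2 * B p.2 p.1| ≤ frobNorm A * frobNorm B := by
    rw [← Real.sqrt_sq_eq_abs, ← Real.sqrt_sq hnn]
    apply Real.sqrt_le_sqrt
    calc (∑ p : m × n, A p.1 p.2 * B p.2 p.1)^2
        ≤ frobNorm A ^2 * frobNorm B ^2 := by rw [← h3, ← h4]; exact h2
      _ = (frobNorm A * frobNorm B)^2 := by ring
  exact (le_abs_self _).trans habs

lemma trace_DSD_ge (D S : Matrix n n ℝ) (hD : Dᵀ = D) (c : ℝ)
    (hform : ∀ x : n → ℝ, c * (x ⬝ᵥ x) ≤ x ⬝ᵥ (S *ᵥ x)) :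
    c * frobNorm D ^ 2 ≤ Matrix.trace (D * S * D) := by
  have h1 : Matrix.trace (D * S * D) = ∑ i, (D i) ⬝ᵥ (S *ᵥ (D i)) := by
    apply Finset.sum_congr rfl
    intro i _
    simp only [Matrix.diag, Matrix.mul_apply, dotProduct, Matrix.mulVec,
      Finset.sum_mul, Finset.mul_sum]
    rw [Finset.sum_comm]
    apply Finset.sum_congr rfl
    intro k _
    apply Finset.sum_congr rfl
    intro j _
    have hji : D j i = D i j := by rw [← Matrix.transpose_apply D i j, hD]
    rw [hji]; ring
  have h2 : frobNorm D ^ 2 = ∑ i, (D i) ⬝ᵥ (D i) := by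
    rw [frobNorm_sq]
    exact Finset.sum_congr rfl fun i _ => by simp [dotProduct, sq]
  rw [h1, h2, Finset.mul_sum]
  exact Finset.sum_le_sum fun i _ => hform (D i)

lemma diag_entry_eq (N : Matrix n n ℝ) [DecidableEq n] (i : n) :
    (Pi.single i 1 : n → ℝ) ⬝ᵥ (N *ᵥ (Pi.single i 1)) = N i i := by
  rw [Matrix.mulVec_single_one, single_dotProduct]
  simp

lemma trace_le_of_form (N : Matrix n n ℝ) [DecidableEq n] (c : ℝ)
    (hform : ∀ x : n → ℝ, x ⬝ᵥ (N *ᵥ x) ≤ c * (x ⬝ᵥ x)) :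
    Matrix.trace N ≤ c * Fintype.card n := by
  have key : ∀ i : n, N i i ≤ c := by
    intro i
    have h := hform (Pi.single i 1)
    rw [diag_entry_eq] at h
    have hs : (Pi.single i 1 : n → ℝ) ⬝ᵥ (Pi.single i 1) = 1 := by
      rw [single_dotProduct]; simp
    rw [hs, mul_one] at h
    exact h
  calc Matrix.trace N = ∑ i, N i i := rfl
    _ ≤ ∑ _i : n, c := Finset.sum_le_sum fun i _ => key i
    _ = c * Fintype.card n := by simp [mul_comm]

end FrobAux

namespace FrobAux

lemma isHermitian_of_symm {n : Type*} [Fintype n] {N : Matrix n n ℝ} (h : Nᵀ = N) :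
    N.IsHermitian := by
  show Nᴴ = N
  rw [Matrix.conjTranspose_eq_transpose_of_trivial]
  exact h

lemma star_eq_self {n : Type*} (x : n → ℝ) : star x = x := by
  funext i; simp

lemma dot_self_pos {n : Type*} [Fintype n] {x : n → ℝ} (hx : x ≠ 0) : 0 < x ⬝ᵥ x := by
  have := Matrix.dotProduct_star_self_pos_iff (R := ℝ) (v := x)
  rw [star_eq_self] at this
  exact this.mpr hx

/-- the section map, defined globally -/
noncomputable def secf {p d : ℕ} (E : Matrix (Fin p) (Fin d) ℝ)
    (u : Matrix (Fin p) (Fin p) ℝ) : Matrix (Fin p) (Fin d) ℝ :=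
  @dite _ ((Eᵀ * u * E).PosDef) (Classical.dec _)
    (fun _ => u * E * (CFC.sqrt (Eᵀ * u * E))⁻¹) (fun _ => 0)

lemma secf_eq {p d : ℕ} (E : Matrix (Fin p) (Fin d) ℝ) (u : Matrix (Fin p) (Fin p) ℝ)
    (h : (Eᵀ * u * E).PosDef) :
    secf E u = u * E * (CFC.sqrt (Eᵀ * u * E))⁻¹ := by
  rw [secf, dif_pos h]

lemma frob_orth_cols {p d : ℕ} (A : Matrix (Fin p) (Fin d) ℝ) (h : Aᵀ * A = 1) :
    frobNorm A = Real.sqrt d := by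
  rw [frobNorm, Matrix.trace_mul_comm, h, Matrix.trace_one]
  simp

lemma grass_symm {p d : ℕ} {u : Matrix (Fin p) (Fin p) ℝ} (hG : u ∈ grassmannian p d) :
    uᵀ = u := by
  obtain ⟨A, hA1, hA2⟩ := hG
  rw [← hA2, Matrix.transpose_mul, Matrix.transpose_transpose]

lemma grass_idem {p d : ℕ} {u : Matrix (Fin p) (Fin p) ℝ} (hG : u ∈ grassmannian p d) :
    u * u = u := by
  obtain ⟨A, hA1, hA2⟩ := hG
  rw [← hA2]
  calc A * Aᵀ * (A * Aᵀ) = A * (Aᵀ * A) * Aᵀ := by simp only [Matrix.mul_assoc]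
    _ = A * Aᵀ := by rw [hA1]; simp

lemma grass_trace {p d : ℕ} {u : Matrix (Fin p) (Fin p) ℝ} (hG : u ∈ grassmannian p d) :
    Matrix.trace u = d := by
  obtain ⟨A, hA1, hA2⟩ := hG
  rw [← hA2, Matrix.trace_mul_comm, hA1, Matrix.trace_one]
  simp

lemma grass_frob {p d : ℕ} {u : Matrix (Fin p) (Fin p) ℝ} (hG : u ∈ grassmannian p d) :
    frobNorm u = Real.sqrt d := by
  rw [frobNorm, grass_symm hG, grass_idem hG, grass_trace hG]

end FrobAux

namespace FrobAux

lemma dot_mulVec_swap {n : Type*} [Fintype n] {S : Matrix n n ℝ} (hsym : Sᵀ = S)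
    (a b : n → ℝ) : a ⬝ᵥ (S *ᵥ b) = b ⬝ᵥ (S *ᵥ a) := by
  rw [Matrix.dotProduct_mulVec, ← Matrix.mulVec_transpose, hsym, dotProduct_comm]

lemma proj_unique {n : Type*} [Fintype n] (u P : Matrix n n ℝ)
    (hu : u * u = u) (hP : P * P = P) (hup : u * P = P) (hpu : P * u = P)
    (husym : uᵀ = u) (hPsym : Pᵀ = P) (htr : Matrix.trace u = Matrix.trace P) :
    P = u := by
  set Q := u - P with hQ
  have hQQ : Q * Q = Q := by
    rw [hQ, Matrix.sub_mul, Matrix.mul_sub, Matrix.mul_sub, hu, hP, hup, hpu]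
    abel
  have hQsym : Qᵀ = Q := by rw [hQ, Matrix.transpose_sub, husym, hPsym]
  have htrQ : Matrix.trace (Q * Qᵀ) = 0 := by
    rw [hQsym, hQQ, hQ, Matrix.trace_sub, htr, sub_self]
  have hsum : ∑ i, ∑ j, (Q i j)^2 = 0 := by rw [← trace_mul_transpose, htrQ]
  have hQ0 : Q = 0 := by
    ext i j
    have h1 := (Finset.sum_eq_zero_iff_of_nonneg
      (fun i _ => Finset.sum_nonneg fun j _ => sq_nonneg (Q i j))).mp hsum i (Finset.mem_univ i)
    have h2 := (Finset.sum_eq_zero_iff_of_nonneg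
      (fun j _ => sq_nonneg (Q i j))).mp h1 j (Finset.mem_univ j)
    exact (pow_eq_zero_iff (two_ne_zero)).mp h2
  have := sub_eq_zero.mp (hQ ▸ hQ0)
  simp [this]


lemma inv_form_bound {n : Type*} [Fintype n] [DecidableEq n] (M : Matrix n n ℝ)
    (hform_lo : ∀ x : n → ℝ, (1/2) * (x ⬝ᵥ x) ≤ x ⬝ᵥ (M *ᵥ x))
    (hMinv : M * M⁻¹ = 1) :
    ∀ x : n → ℝ, x ⬝ᵥ (M⁻¹ *ᵥ x) ≤ 2 * (x ⬝ᵥ x) := by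
  intro x
  have hx : x = M *ᵥ (M⁻¹ *ᵥ x) := by
    rw [Matrix.mulVec_mulVec, hMinv, Matrix.one_mulVec]
  generalize hy : M⁻¹ *ᵥ x = y at hx ⊢
  have hNy : (M - (1/4 : ℝ) • (1 : Matrix n n ℝ)) *ᵥ y = M *ᵥ y - (1/4 : ℝ) • y := by
    rw [Matrix.sub_mulVec, Matrix.smul_mulVec, Matrix.one_mulVec]
  generalize hz : (M - (1/4 : ℝ) • (1 : Matrix n n ℝ)) *ᵥ y = z at hNy
  have hq_eq : y ⬝ᵥ z = y ⬝ᵥ (M *ᵥ y) - (1/4) * (y ⬝ᵥ y) := by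
    rw [hNy, dotProduct_sub, dotProduct_smul, smul_eq_mul]
  have hnq_lo : (1/4) * (y ⬝ᵥ y) ≤ y ⬝ᵥ z := by
    have := hform_lo y
    rw [hq_eq]; linarith
  have hcs := dot_sq_le y z
  have hlhs : x ⬝ᵥ y = y ⬝ᵥ (M *ᵥ y) := by
    calc x ⬝ᵥ y = (M *ᵥ y) ⬝ᵥ y := by rw [← hx]
      _ = y ⬝ᵥ (M *ᵥ y) := dotProduct_comm _ _
  have hMy : M *ᵥ y = z + (1/4 : ℝ) • y := by rw [hNy]; abel
  have hrhs : x ⬝ᵥ x = z ⬝ᵥ z + (1/2) * (y ⬝ᵥ z) + (1/16) * (y ⬝ᵥ y) := by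
    conv_lhs => rw [hx, hMy]
    simp only [add_dotProduct, dotProduct_add, smul_dotProduct,
      dotProduct_smul, smul_eq_mul]
    have hcm : z ⬝ᵥ y = y ⬝ᵥ z := dotProduct_comm _ _
    rw [hcm]; ring
  rw [hlhs, hrhs]
  have ha0 := dot_self_nonneg y
  have hr0 := dot_self_nonneg z
  have key : (y ⬝ᵥ y) ≤ 16 * (z ⬝ᵥ z) := by
    rcases ha0.eq_or_lt with ha | ha
    · rw [← ha]; linarith
    · have hnq0 : 0 ≤ y ⬝ᵥ z := le_trans (by positivity) hnq_lo
      have h16 : (1/4 * (y ⬝ᵥ y)) * (1/4 * (y ⬝ᵥ y)) ≤ (y ⬝ᵥ z) * (y ⬝ᵥ z) :=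
        mul_le_mul hnq_lo hnq_lo (by positivity) hnq0
      nlinarith [hcs, h16, ha]
  rw [hq_eq] at hnq_lo ⊢
  linarith

lemma main_u {p d : ℕ} (hd : 1 ≤ d) (E : Matrix (Fin p) (Fin d) ℝ) (hE : Eᵀ * E = 1)
    {u : Matrix (Fin p) (Fin p) ℝ} (hG : u ∈ grassmannian p d)
    (hW : frobNorm (Eᵀ * u * E - 1) < 1/2) :
    ∃ S : Matrix (Fin d) (Fin d) ℝ,
      Sᵀ = S ∧ S * S = Eᵀ * u * E ∧
      (∀ x : Fin d → ℝ, 1/(2 * Real.sqrt (2*(d:ℝ))) * (x ⬝ᵥ x) ≤ x ⬝ᵥ (S *ᵥ x)) ∧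
      frobNorm S⁻¹ ≤ Real.sqrt (2*(d:ℝ)) ∧
      S * S⁻¹ = 1 ∧ S⁻¹ * S = 1 ∧
      secf E u = u * E * S⁻¹ ∧
      (secf E u)ᵀ * secf E u = 1 ∧
      secf E u * (secf E u)ᵀ = u := by
  have husym := grass_symm hG
  have huu := grass_idem hG
  have hdR : (1:ℝ) ≤ (d:ℝ) := by exact_mod_cast hd
  set K := Real.sqrt (2*(d:ℝ)) with hK
  have hKsq : K^2 = 2*(d:ℝ) := Real.sq_sqrt (by linarith)
  have hKpos : 0 < K := Real.sqrt_pos.mpr (by linarith)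
  -- symmetry of M
  have hMsymT : (Eᵀ * u * E)ᵀ = Eᵀ * u * E := by
    simp [Matrix.transpose_mul, Matrix.mul_assoc, husym]
  -- lower and upper form bounds on M
  have hform_lo : ∀ x : Fin d → ℝ, (1/2) * (x ⬝ᵥ x) ≤ x ⬝ᵥ ((Eᵀ * u * E) *ᵥ x) := by
    intro x
    have h1 : (Eᵀ * u * E) *ᵥ x = (Eᵀ * u * E - 1) *ᵥ x + x := by
      rw [Matrix.sub_mulVec, Matrix.one_mulVec]; abel
    have habs := abs_quadform_le (Eᵀ * u * E - 1) x
    have hle : frobNorm (Eᵀ * u * E - 1) * (x ⬝ᵥ x) ≤ (1/2) * (x ⬝ᵥ x) :=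
      mul_le_mul_of_nonneg_right hW.le (dot_self_nonneg x)
    rw [h1, dotProduct_add]
    have := abs_le.mp habs
    linarith [this.1]
  have hform_hi : ∀ x : Fin d → ℝ, x ⬝ᵥ ((Eᵀ * u * E) *ᵥ x) ≤ (3/2) * (x ⬝ᵥ x) := by
    intro x
    have h1 : (Eᵀ * u * E) *ᵥ x = (Eᵀ * u * E - 1) *ᵥ x + x := by
      rw [Matrix.sub_mulVec, Matrix.one_mulVec]; abel
    have habs := abs_quadform_le (Eᵀ * u * E - 1) x
    have hle : frobNorm (Eᵀ * u * E - 1) * (x ⬝ᵥ x) ≤ (1/2) * (x ⬝ᵥ x) :=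
      mul_le_mul_of_nonneg_right hW.le (dot_self_nonneg x)
    rw [h1, dotProduct_add]
    have := abs_le.mp habs
    linarith [this.2]
  -- M is positive definite
  have hMpd : (Eᵀ * u * E).PosDef := by
    refine Matrix.PosDef.of_dotProduct_mulVec_pos (isHermitian_of_symm hMsymT) fun x hx => ?_
    rw [star_eq_self]
    have := hform_lo x
    have := dot_self_pos hx
    linarith
  have hMpsd := hMpd.posSemidef
  obtain ⟨S, hSpsd, hSS, hsec⟩ :
      ∃ S : Matrix (Fin d) (Fin d) ℝ, S.PosSemidef ∧ S * S = Eᵀ * u * E ∧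
        secf E u = u * E * S⁻¹ :=
    ⟨CFC.sqrt _, (CFC.sqrt_nonneg _).posSemidef, CFC.sqrt_mul_sqrt_self _ hMpsd.nonneg, secf_eq E u hMpd⟩
  refine ⟨S, ?_⟩
  have hSsymT : Sᵀ = S := by
    have h := hSpsd.isHermitian
    rw [← Matrix.conjTranspose_eq_transpose_of_trivial S]
    exact h
  have hSform0 : ∀ z : Fin d → ℝ, 0 ≤ z ⬝ᵥ (S *ᵥ z) := fun z => by
    have := hSpsd.dotProduct_mulVec_nonneg z
    rwa [star_eq_self] at this
  -- trace of M
  have htrM : Matrix.trace (Eᵀ * u * E) ≤ (3/2) * d := by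
    have := trace_le_of_form (Eᵀ * u * E) (3/2) hform_hi
    simpa using this
  -- Frobenius bound on S
  have hfrobS : frobNorm S ≤ K := by
    have h1 : frobNorm S ^ 2 = Matrix.trace (Eᵀ * u * E) := by
      rw [frobNorm_sq', hSsymT, hSS]
    have h2 : frobNorm S ^2 ≤ K^2 := by rw [h1, hKsq]; linarith
    nlinarith [frobNorm_nonneg S]
  have hSform_hi : ∀ x : Fin d → ℝ, x ⬝ᵥ (S *ᵥ x) ≤ K * (x ⬝ᵥ x) := by
    intro x
    have := (le_abs_self _).trans (abs_quadform_le S x)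
    have h2 : frobNorm S * (x ⬝ᵥ x) ≤ K * (x ⬝ᵥ x) :=
      mul_le_mul_of_nonneg_right hfrobS (dot_self_nonneg x)
    linarith
  -- K • S - M is positive semidefinite (as a form)
  have e3 : ∀ x : Fin d → ℝ, x ⬝ᵥ ((Eᵀ * u * E) *ᵥ x) ≤ K * (x ⬝ᵥ (S *ᵥ x)) := by
    intro x
    have hMx : (Eᵀ * u * E) *ᵥ x = S *ᵥ (S *ᵥ x) := by rw [Matrix.mulVec_mulVec, hSS]
    have hww : (S *ᵥ x) ⬝ᵥ (S *ᵥ x) = x ⬝ᵥ ((Eᵀ * u * E) *ᵥ x) := by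
      calc (S *ᵥ x) ⬝ᵥ (S *ᵥ x) = x ⬝ᵥ (S *ᵥ (S *ᵥ x)) := dot_mulVec_swap hSsymT _ x
        _ = x ⬝ᵥ ((Eᵀ * u * E) *ᵥ x) := by rw [← hMx]
    have hcs := form_cs S hSsymT hSform0 x (S *ᵥ x)
    have h5 := hSform_hi (S *ᵥ x)
    rw [← hMx] at hcs h5
    rw [hww] at h5
    have hs0 := hSform0 x
    have hb0 : 0 ≤ x ⬝ᵥ ((Eᵀ * u * E) *ᵥ x) := hww ▸ dot_self_nonneg (S *ᵥ x)
    rcases hb0.eq_or_lt with hb | hb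
    · rw [← hb]; positivity
    · nlinarith [hcs, mul_le_mul_of_nonneg_left h5 hs0, hb]
  -- lower form bound on S
  have hSform_lo : ∀ x : Fin d → ℝ, 1/(2*K) * (x ⬝ᵥ x) ≤ x ⬝ᵥ (S *ᵥ x) := by
    intro x
    have h2K : (0:ℝ) < 2*K := by linarith
    rw [div_mul_eq_mul_div, div_le_iff₀ h2K, one_mul]
    have := e3 x
    have := hform_lo x
    nlinarith [this]
  -- invertibility
  have hMdet : IsUnit (Eᵀ * u * E).det := hMpd.det_pos.ne'.isUnit
  have hMinv : (Eᵀ * u * E) * (Eᵀ * u * E)⁻¹ = 1 := Matrix.mul_nonsing_inv _ hMdet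
  have hMinv' : (Eᵀ * u * E)⁻¹ * (Eᵀ * u * E) = 1 := Matrix.nonsing_inv_mul _ hMdet
  have hMinvsym : ((Eᵀ * u * E)⁻¹)ᵀ = (Eᵀ * u * E)⁻¹ := by
    rw [Matrix.transpose_nonsing_inv, hMsymT]
  have hSdetU : IsUnit S.det := by
    have hdet2 : S.det * S.det = (Eᵀ * u * E).det := by rw [← Matrix.det_mul, hSS]
    have hMdp := hMpd.det_pos
    refine isUnit_iff_ne_zero.mpr fun h0 => ?_
    rw [h0, mul_zero] at hdet2
    rw [← hdet2] at hMdp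
    exact lt_irrefl 0 hMdp
  have hSinv : S * S⁻¹ = 1 := Matrix.mul_nonsing_inv _ hSdetU
  have hSinv' : S⁻¹ * S = 1 := Matrix.nonsing_inv_mul _ hSdetU
  have hSinvsym : (S⁻¹)ᵀ = S⁻¹ := by rw [Matrix.transpose_nonsing_inv, hSsymT]
  have hSSinv : S⁻¹ * S⁻¹ = (Eᵀ * u * E)⁻¹ := by rw [← Matrix.mul_inv_rev, hSS]
  have hMinvform : ∀ x : Fin d → ℝ, x ⬝ᵥ ((Eᵀ * u * E)⁻¹ *ᵥ x) ≤ 2 * (x ⬝ᵥ x) :=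
    inv_form_bound (Eᵀ * u * E) hform_lo hMinv
  have hMinvtr : Matrix.trace ((Eᵀ * u * E)⁻¹) ≤ 2 * d := by
    have := trace_le_of_form _ 2 hMinvform
    simpa using this
  have hfrobSinv : frobNorm S⁻¹ ≤ K := by
    have h1 : frobNorm S⁻¹ ^ 2 = Matrix.trace ((Eᵀ * u * E)⁻¹) := by
      rw [frobNorm_sq', hSinvsym, hSSinv]
    have h2 : frobNorm S⁻¹ ^2 ≤ K^2 := by rw [h1, hKsq]; linarith
    nlinarith [frobNorm_nonneg S⁻¹]
  -- the section
  have hσT : (secf E u)ᵀ = S⁻¹ * Eᵀ * u := by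
    rw [hsec]
    simp [Matrix.transpose_mul, hSinvsym, husym, Matrix.mul_assoc]
  have h1 : (secf E u)ᵀ * secf E u = 1 := by
    rw [hσT, hsec]
    calc S⁻¹ * Eᵀ * u * (u * E * S⁻¹)
        = S⁻¹ * (Eᵀ * (u * u) * E) * S⁻¹ := by simp only [Matrix.mul_assoc]
      _ = S⁻¹ * (Eᵀ * u * E) * S⁻¹ := by rw [huu]
      _ = S⁻¹ * (S * S) * S⁻¹ := by rw [hSS]
      _ = S⁻¹ * S * (S * S⁻¹) := by simp only [Matrix.mul_assoc]
      _ = 1 := by rw [hSinv', hSinv, Matrix.one_mul]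
  have h2 : secf E u * (secf E u)ᵀ = u := by
    rw [hσT, hsec]
    have hP : u * E * S⁻¹ * (S⁻¹ * Eᵀ * u) = u * E * (Eᵀ * u * E)⁻¹ * Eᵀ * u := by
      calc u * E * S⁻¹ * (S⁻¹ * Eᵀ * u)
          = u * E * (S⁻¹ * S⁻¹) * Eᵀ * u := by simp only [Matrix.mul_assoc]
        _ = u * E * (Eᵀ * u * E)⁻¹ * Eᵀ * u := by rw [hSSinv]
    rw [hP]
    set P := u * E * (Eᵀ * u * E)⁻¹ * Eᵀ * u with hPdef
    -- show P = u via proj_unique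
    have hup : u * P = P := by
      rw [hPdef]
      calc u * (u * E * (Eᵀ * u * E)⁻¹ * Eᵀ * u)
          = u * u * E * (Eᵀ * u * E)⁻¹ * Eᵀ * u := by simp only [Matrix.mul_assoc]
        _ = u * E * (Eᵀ * u * E)⁻¹ * Eᵀ * u := by rw [huu]
    have hpu : P * u = P := by
      rw [hPdef, Matrix.mul_assoc (u * E * (Eᵀ * u * E)⁻¹ * Eᵀ) u u, huu]
    have hPP : P * P = P := by
      rw [hPdef]
      calc (u * E * (Eᵀ * u * E)⁻¹ * Eᵀ * u) * (u * E * (Eᵀ * u * E)⁻¹ * Eᵀ * u)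
          = u * E * ((Eᵀ * u * E)⁻¹ * (Eᵀ * (u * u) * E) * (Eᵀ * u * E)⁻¹) * Eᵀ * u := by
            simp only [Matrix.mul_assoc]
        _ = u * E * ((Eᵀ * u * E)⁻¹ * (Eᵀ * u * E) * (Eᵀ * u * E)⁻¹) * Eᵀ * u := by rw [huu]
        _ = u * E * (Eᵀ * u * E)⁻¹ * Eᵀ * u := by rw [hMinv', Matrix.one_mul]
    have hPsym : Pᵀ = P := by
      rw [hPdef]
      simp only [Matrix.transpose_mul, Matrix.transpose_transpose, hMinvsym, husym]
      simp only [Matrix.mul_assoc]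
    have htrP : Matrix.trace u = Matrix.trace P := by
      have hPalt : P = (u * E * (Eᵀ * u * E)⁻¹) * (Eᵀ * u) := by
        rw [hPdef]; simp only [Matrix.mul_assoc]
      have step : (Eᵀ * u) * (u * E * (Eᵀ * u * E)⁻¹) = (Eᵀ * u * E) * (Eᵀ * u * E)⁻¹ := by
        calc (Eᵀ * u) * (u * E * (Eᵀ * u * E)⁻¹)
            = Eᵀ * (u * u) * E * (Eᵀ * u * E)⁻¹ := by simp only [Matrix.mul_assoc]
          _ = (Eᵀ * u * E) * (Eᵀ * u * E)⁻¹ := by rw [huu]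
      rw [hPalt, Matrix.trace_mul_comm (u * E * (Eᵀ * u * E)⁻¹) (Eᵀ * u), step, hMinv,
        grass_trace hG, Matrix.trace_one]
      simp
    exact proj_unique u P huu hPP hup hpu husym hPsym htrP
  exact ⟨hSsymT, hSS, hSform_lo, hfrobSinv, hSinv, hSinv', hsec, h1, h2⟩

end FrobAux

namespace FrobAux

lemma frobNorm_zero {m n : Type*} [Fintype m] [Fintype n] :
    frobNorm (0 : Matrix m n ℝ) = 0 := by
  rw [frobNorm_eq]; simp

lemma frobNorm_sub_comm {m n : Type*} [Fintype m] [Fintype n] (A B : Matrix m n ℝ) :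
    frobNorm (A - B) = frobNorm (B - A) := by
  simp only [frobNorm_eq]
  congr 1
  refine Finset.sum_congr rfl fun i _ => Finset.sum_congr rfl fun j _ => ?_
  rw [Matrix.sub_apply, Matrix.sub_apply]
  ring

lemma frobNorm_mul3_le {k l m n : Type*} [Fintype k] [Fintype l] [Fintype m] [Fintype n]
    (A : Matrix k l ℝ) (B : Matrix l m ℝ) (C : Matrix m n ℝ) :
    frobNorm (A * B * C) ≤ frobNorm A * frobNorm B * frobNorm C :=
  (frobNorm_mul_le _ C).trans
    (mul_le_mul_of_nonneg_right (frobNorm_mul_le A B) (frobNorm_nonneg C))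

lemma sqrt_diff_bound {n : Type*} [Fintype n] (S₁ S₂ M₁ M₂ : Matrix n n ℝ) (c : ℝ) (hc : 0 < c)
    (h1sym : S₁ᵀ = S₁) (h2sym : S₂ᵀ = S₂) (hS1 : S₁ * S₁ = M₁) (hS2 : S₂ * S₂ = M₂)
    (hf1 : ∀ x : n → ℝ, c * (x ⬝ᵥ x) ≤ x ⬝ᵥ (S₁ *ᵥ x))
    (hf2 : ∀ x : n → ℝ, c * (x ⬝ᵥ x) ≤ x ⬝ᵥ (S₂ *ᵥ x)) :
    frobNorm (S₁ - S₂) ≤ (1/(2*c)) * frobNorm (M₁ - M₂) := by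
  have hDsym : (S₁ - S₂)ᵀ = S₁ - S₂ := by rw [Matrix.transpose_sub, h1sym, h2sym]
  have hMdiff : M₁ - M₂ = S₁ * (S₁ - S₂) + (S₁ - S₂) * S₂ := by
    rw [← hS1, ← hS2, Matrix.mul_sub, Matrix.sub_mul]
    abel
  have htr : Matrix.trace ((S₁ - S₂) * (M₁ - M₂)) =
      Matrix.trace ((S₁ - S₂) * S₁ * (S₁ - S₂)) + Matrix.trace ((S₁ - S₂) * S₂ * (S₁ - S₂)) := by
    rw [hMdiff, Matrix.mul_add, Matrix.trace_add]
    congr 1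
    · rw [← Matrix.mul_assoc]
    · rw [Matrix.trace_mul_comm (S₁ - S₂) ((S₁ - S₂) * S₂)]
  have hge1 := trace_DSD_ge (S₁ - S₂) S₁ hDsym c hf1
  have hge2 := trace_DSD_ge (S₁ - S₂) S₂ hDsym c hf2
  have hle := trace_mul_le (S₁ - S₂) (M₁ - M₂)
  have hkey : 2 * c * frobNorm (S₁ - S₂) ^ 2 ≤ frobNorm (S₁ - S₂) * frobNorm (M₁ - M₂) := by
    rw [htr] at hle
    linarith
  have hD0 := frobNorm_nonneg (S₁ - S₂)
  have hM0 := frobNorm_nonneg (M₁ - M₂)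
  rcases hD0.eq_or_lt with h0 | h0
  · rw [← h0]; positivity
  · rw [div_mul_eq_mul_div, le_div_iff₀ (by linarith : (0:ℝ) < 2*c), one_mul]
    nlinarith [hkey, h0]

end FrobAux

open FrobAux

/-- For `1 ≤ d ≤ p` there exist a nonempty subset `U` of `G(p,d)`, relatively
open in `G(p,d)` (for the Frobenius-norm topology of `ℝ^{p×p}`), a section
`σ : U → {A : AᵀA = I_d}` of the tautological map `A ↦ AAᵀ`, and constants `C₁, C₂ > 0` such
that `C₁‖u₁ − u₂‖_F ≤ ‖σ(u₁) − σ(u₂)‖_F ≤ C₂‖u₁ − u₂‖_F` for all `u₁, u₂ ∈ U`. -/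
theorem exists_bilipschitz_section_grassmannian (p d : ℕ) (hd : 1 ≤ d) (hdp : d ≤ p) :
    ∃ U : Set (Matrix (Fin p) (Fin p) ℝ),
      U.Nonempty ∧ U ⊆ grassmannian p d ∧
      (∃ W : Set (Matrix (Fin p) (Fin p) ℝ), IsOpen W ∧ U = W ∩ grassmannian p d) ∧
      ∃ σ : Matrix (Fin p) (Fin p) ℝ → Matrix (Fin p) (Fin d) ℝ,
        (∀ u ∈ U, (σ u)ᵀ * σ u = 1 ∧ σ u * (σ u)ᵀ = u) ∧
        ∃ C₁ C₂ : ℝ, 0 < C₁ ∧ 0 < C₂ ∧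
          ∀ u₁ ∈ U, ∀ u₂ ∈ U,
            C₁ * frobNorm (u₁ - u₂) ≤ frobNorm (σ u₁ - σ u₂) ∧
            frobNorm (σ u₁ - σ u₂) ≤ C₂ * frobNorm (u₁ - u₂) := by
  classical
  -- the reference frame
  set E : Matrix (Fin p) (Fin d) ℝ :=
    Matrix.of (fun i j => if i = Fin.castLE hdp j then (1:ℝ) else 0) with hEdef
  have hE : Eᵀ * E = 1 := by
    ext i j
    simp only [Matrix.mul_apply, Matrix.transpose_apply, hEdef, Matrix.of_apply,
      ite_mul, one_mul, zero_mul, Finset.sum_ite_eq, Finset.mem_univ, if_true,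
      Matrix.one_apply]
    by_cases h : i = j
    · simp [h]
    · simp [h, fun hc => h (Fin.castLE_injective hdp hc)]
  -- basic constants
  have hdR : (1:ℝ) ≤ (d:ℝ) := by exact_mod_cast hd
  set K := Real.sqrt (2*(d:ℝ)) with hK
  have hKsq : K^2 = 2*(d:ℝ) := Real.sq_sqrt (by linarith)
  have hKpos : 0 < K := Real.sqrt_pos.mpr (by linarith)
  have hsqd_le : Real.sqrt (d:ℝ) ≤ K := Real.sqrt_le_sqrt (by linarith)
  -- the open set
  set W : Set (Matrix (Fin p) (Fin p) ℝ) :=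
    {u | frobNorm (Eᵀ * u * E - 1) < 1/2} with hWdef
  set U := W ∩ grassmannian p d with hUdef
  have hWopen : IsOpen W := by
    have hcont : Continuous (fun u : Matrix (Fin p) (Fin p) ℝ => frobNorm (Eᵀ * u * E - 1)) := by
      have heq : (fun u : Matrix (Fin p) (Fin p) ℝ => frobNorm (Eᵀ * u * E - 1)) =
          fun u => Real.sqrt (∑ i, ∑ j, ((Eᵀ * u * E - 1 : Matrix (Fin d) (Fin d) ℝ) i j)^2) := by
        funext u; rw [frobNorm_eq]
      rw [heq]
      apply Real.continuous_sqrt.comp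
      refine continuous_finset_sum _ (fun i _ => continuous_finset_sum _ (fun j _ => ?_))
      have hentry : Continuous (fun u : Matrix (Fin p) (Fin p) ℝ =>
          (Eᵀ * u * E - 1 : Matrix (Fin d) (Fin d) ℝ) i j) := by
        have : (fun u : Matrix (Fin p) (Fin p) ℝ => (Eᵀ * u * E - 1 : Matrix (Fin d) (Fin d) ℝ) i j) =
            fun u => (∑ l, (∑ k, Eᵀ i k * u k l) * E l j) - (1 : Matrix (Fin d) (Fin d) ℝ) i j := by
          funext u
          simp [Matrix.sub_apply, Matrix.mul_apply]
        rw [this]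
        refine Continuous.sub ?_ continuous_const
        refine continuous_finset_sum _ (fun l _ => Continuous.mul ?_ continuous_const)
        refine continuous_finset_sum _ (fun k _ => Continuous.mul continuous_const ?_)
        exact (continuous_apply l).comp (continuous_apply k)
      exact hentry.pow 2
    exact isOpen_lt hcont continuous_const
  -- nonemptiness
  have hu₀G : E * Eᵀ ∈ grassmannian p d := ⟨E, hE, rfl⟩
  have hu₀W : E * Eᵀ ∈ W := by
    have h0 : Eᵀ * (E * Eᵀ) * E = 1 := by
      calc Eᵀ * (E * Eᵀ) * E = (Eᵀ * E) * (Eᵀ * E) := by simp only [Matrix.mul_assoc]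
        _ = 1 := by rw [hE, Matrix.one_mul]
    show frobNorm (Eᵀ * (E * Eᵀ) * E - 1) < 1/2
    rw [h0, sub_self, frobNorm_zero]
    norm_num
  refine ⟨U, ⟨E * Eᵀ, hu₀W, hu₀G⟩, Set.inter_subset_right, ⟨W, hWopen, rfl⟩, secf E, ?_, ?_⟩
  · intro u hu
    obtain ⟨S, _, _, _, _, _, _, _, h1, h2⟩ := main_u hd E hE hu.2 hu.1
    exact ⟨h1, h2⟩
  · refine ⟨1/(2*K), K^2 + K^7, by positivity, by positivity, ?_⟩
    intro u₁ hu₁ u₂ hu₂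
    obtain ⟨S₁, hS1sym, hS1S, hS1lo, hS1invK, hS1i, hS1i', hsec1, hσ1a, hσ1b⟩ :=
      main_u hd E hE hu₁.2 hu₁.1
    obtain ⟨S₂, hS2sym, hS2S, hS2lo, hS2invK, hS2i, hS2i', hsec2, hσ2a, hσ2b⟩ :=
      main_u hd E hE hu₂.2 hu₂.1
    have hfrobE : frobNorm E ≤ K := by rw [frob_orth_cols E hE]; exact hsqd_le
    have hfrobET : frobNorm Eᵀ ≤ K := by rw [frobNorm_transpose]; exact hfrobE
    have hfrobσ1 : frobNorm (secf E u₁) ≤ K := by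
      rw [frob_orth_cols _ hσ1a]; exact hsqd_le
    have hfrobσ2 : frobNorm (secf E u₂) ≤ K := by
      rw [frob_orth_cols _ hσ2a]; exact hsqd_le
    have hfrobu2 : frobNorm u₂ ≤ K := by rw [grass_frob hu₂.2]; exact hsqd_le
    set t := frobNorm (u₁ - u₂) with ht
    set s := frobNorm (secf E u₁ - secf E u₂) with hs
    have ht0 : 0 ≤ t := frobNorm_nonneg _
    have hs0 : 0 ≤ s := frobNorm_nonneg _
    constructor
    · -- lower bound
      have hdiff : u₁ - u₂ = secf E u₁ * (secf E u₁ - secf E u₂)ᵀ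
          + (secf E u₁ - secf E u₂) * (secf E u₂)ᵀ := by
        rw [Matrix.transpose_sub, Matrix.mul_sub, Matrix.sub_mul, hσ1b, hσ2b]
        abel
      have h1 : t ≤ frobNorm (secf E u₁ * (secf E u₁ - secf E u₂)ᵀ)
          + frobNorm ((secf E u₁ - secf E u₂) * (secf E u₂)ᵀ) := by
        rw [ht, hdiff]; exact frobNorm_add_le _ _
      have h2 : frobNorm (secf E u₁ * (secf E u₁ - secf E u₂)ᵀ) ≤ K * s := by
        refine (frobNorm_mul_le _ _).trans ?_
        rw [frobNorm_transpose]
        exact mul_le_mul_of_nonneg_right hfrobσ1 hs0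
      have h3 : frobNorm ((secf E u₁ - secf E u₂) * (secf E u₂)ᵀ) ≤ s * K := by
        refine (frobNorm_mul_le _ _).trans ?_
        rw [frobNorm_transpose]
        exact mul_le_mul_of_nonneg_left hfrobσ2 hs0
      have : t ≤ 2*K*s := by linarith
      rw [div_mul_eq_mul_div, div_le_iff₀ (by linarith : (0:ℝ) < 2*K), one_mul]
      linarith [mul_le_mul_of_nonneg_right this (le_of_lt hKpos)]
    · -- upper bound
      -- difference of the M's
      have hMdiff : Eᵀ * u₁ * E - Eᵀ * u₂ * E = Eᵀ * (u₁ - u₂) * E := by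
        rw [Matrix.mul_sub, Matrix.sub_mul]
      have hMbound : frobNorm (Eᵀ * u₁ * E - Eᵀ * u₂ * E) ≤ K * t * K := by
        rw [hMdiff]
        refine (frobNorm_mul3_le _ _ _).trans ?_
        have h1 : frobNorm Eᵀ * frobNorm (u₁ - u₂) ≤ K * t :=
          mul_le_mul_of_nonneg_right hfrobET ht0
        have h2 : 0 ≤ K * t := by positivity
        calc frobNorm Eᵀ * frobNorm (u₁ - u₂) * frobNorm E
            ≤ K * t * frobNorm E := mul_le_mul_of_nonneg_right h1 (frobNorm_nonneg E)
          _ ≤ K * t * K := mul_le_mul_of_nonneg_left hfrobE h2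
      -- bound on S₁ - S₂
      have hc : (0:ℝ) < 1/(2*K) := by positivity
      have hSdiff := sqrt_diff_bound S₁ S₂ (Eᵀ * u₁ * E) (Eᵀ * u₂ * E) (1/(2*K)) hc
        hS1sym hS2sym hS1S hS2S hS1lo hS2lo
      have hinvc : 1/(2*(1/(2*K))) = K := by field_simp
      rw [hinvc] at hSdiff
      have hSdiff' : frobNorm (S₁ - S₂) ≤ K * (K * t * K) :=
        hSdiff.trans (mul_le_mul_of_nonneg_left hMbound (le_of_lt hKpos))
      -- difference of inverses
      have hinvdiff : S₁⁻¹ - S₂⁻¹ = S₁⁻¹ * (S₂ - S₁) * S₂⁻¹ := by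
        calc S₁⁻¹ - S₂⁻¹ = S₁⁻¹ * (S₂ * S₂⁻¹) - (S₁⁻¹ * S₁) * S₂⁻¹ := by
              rw [hS2i, hS1i', Matrix.mul_one, Matrix.one_mul]
          _ = S₁⁻¹ * (S₂ - S₁) * S₂⁻¹ := by
              rw [Matrix.mul_sub, Matrix.sub_mul]
              simp only [Matrix.mul_assoc]
      have hinvbound : frobNorm (S₁⁻¹ - S₂⁻¹) ≤ K * (K * (K * t * K)) * K := by
        rw [hinvdiff]
        refine (frobNorm_mul3_le _ _ _).trans ?_
        have hmid : frobNorm (S₂ - S₁) ≤ K * (K * t * K) := by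
          rw [frobNorm_sub_comm]; exact hSdiff'
        have h1 : frobNorm S₁⁻¹ * frobNorm (S₂ - S₁) ≤ K * (K * (K * t * K)) := by
          calc frobNorm S₁⁻¹ * frobNorm (S₂ - S₁)
              ≤ K * frobNorm (S₂ - S₁) :=
                mul_le_mul_of_nonneg_right hS1invK (frobNorm_nonneg _)
            _ ≤ K * (K * (K * t * K)) := mul_le_mul_of_nonneg_left hmid (le_of_lt hKpos)
        calc frobNorm S₁⁻¹ * frobNorm (S₂ - S₁) * frobNorm S₂⁻¹
            ≤ K * (K * (K * t * K)) * frobNorm S₂⁻¹ :=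
              mul_le_mul_of_nonneg_right h1 (frobNorm_nonneg _)
          _ ≤ K * (K * (K * t * K)) * K :=
              mul_le_mul_of_nonneg_left hS2invK (by positivity)
      -- split σ₁ - σ₂
      have hsplit : secf E u₁ - secf E u₂ =
          (u₁ - u₂) * E * S₁⁻¹ + u₂ * E * (S₁⁻¹ - S₂⁻¹) := by
        rw [hsec1, hsec2, Matrix.sub_mul, Matrix.sub_mul, Matrix.mul_sub]
        abel
      have hterm1 : frobNorm ((u₁ - u₂) * E * S₁⁻¹) ≤ t * K * K := by
        refine (frobNorm_mul3_le _ _ _).trans ?_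
        have h1 : frobNorm (u₁ - u₂) * frobNorm E ≤ t * K :=
          mul_le_mul_of_nonneg_left hfrobE ht0
        calc frobNorm (u₁ - u₂) * frobNorm E * frobNorm S₁⁻¹
            ≤ t * K * frobNorm S₁⁻¹ := mul_le_mul_of_nonneg_right h1 (frobNorm_nonneg _)
          _ ≤ t * K * K := mul_le_mul_of_nonneg_left hS1invK (by positivity)
      have hterm2 : frobNorm (u₂ * E * (S₁⁻¹ - S₂⁻¹)) ≤ K * K * (K * (K * (K * t * K)) * K) := by
        refine (frobNorm_mul3_le _ _ _).trans ?_
        have h1 : frobNorm u₂ * frobNorm E ≤ K * K := by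
          calc frobNorm u₂ * frobNorm E ≤ K * frobNorm E :=
                mul_le_mul_of_nonneg_right hfrobu2 (frobNorm_nonneg _)
            _ ≤ K * K := mul_le_mul_of_nonneg_left hfrobE (le_of_lt hKpos)
        calc frobNorm u₂ * frobNorm E * frobNorm (S₁⁻¹ - S₂⁻¹)
            ≤ K * K * frobNorm (S₁⁻¹ - S₂⁻¹) :=
              mul_le_mul_of_nonneg_right h1 (frobNorm_nonneg _)
          _ ≤ K * K * (K * (K * (K * t * K)) * K) :=
              mul_le_mul_of_nonneg_left hinvbound (by positivity)
      have hsum : s ≤ t * K * K + K * K * (K * (K * (K * t * K)) * K) := by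
        rw [hs, hsplit]
        exact (frobNorm_add_le _ _).trans (add_le_add hterm1 hterm2)
      have : t * K * K + K * K * (K * (K * (K * t * K)) * K) = (K^2 + K^7) * t := by ring
      rw [this] at hsum
      exact hsum
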